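/- Let R be a commutative ring, n ≥ 0, S = R[x₀,…,xₙ] the polynomial ring in n+1 variables, and k ≥ 1. Let D_k denote the set of exponent vectors d : {0,…,n} → ℕ with Σ_i d(i) = k, so that the monomials x^d for d ∈ D_k are exactly the monic monomials of degree k. Consider the S-linear map f : S^(D_k) → S defined on basis vectors by f(e_d) = x^d, and the S-linear map g : S^(D_{k−1} × {(i,j) : 0 ≤ i < j ≤ n}) → S^(D_k) defined by g(e_{q,i,j}) = x_i · e_{q+δ_j} − x_j · e_{q+δ_i}, where δ_i is the exponent vector of x_i. Then the image of f is the ideal of S generated by the monomials of degree k, and the kernel of f equals the image of g. -/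

import Mathlib

/-- Exponent vectors `d : Fin (n+1) →₀ ℕ` of total degree `k`, indexing the monic monomials
`x^d` of degree `k` in `n+1` variables. -/
def ExpVec (n k : ℕ) : Type :=
  {d : Fin (n + 1) →₀ ℕ // d.sum (fun _ v => v) = k}

/-- Adding `1` to the `i`-th entry of an exponent vector of degree `k` gives one of degree
`k + 1` (multiplication of the monomial `x^q` by `x_i`). -/
noncomputable def ExpVec.addVar {n k : ℕ} (q : ExpVec n k) (i : Fin (n + 1)) : ExpVec n (k + 1) :=
  ⟨q.1 + Finsupp.single i 1, by
    rw [Finsupp.sum_add_index' (fun _ => rfl) (fun _ _ _ => rfl), q.2,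
      Finsupp.sum_single_index rfl]⟩

/-- Let `S = R[x₀,…,xₙ]` and `k = m + 1 ≥ 1`. Let `f : S^{D_k} → S`, `e_d ↦ x^d` and
`g : S^{D_{k-1} × {(i,j) : i < j}} → S^{D_k}`, `e_{q,i,j} ↦ x_i • e_{q+δ_j} - x_j • e_{q+δ_i}`.
Then the image of `f` is the ideal generated by the monomials of degree `k` and
`ker f = im g`. -/
lemma sum_eq_univ_sum {n : ℕ} (d : Fin (n+1) →₀ ℕ) : d.sum (fun _ v => v) = ∑ i, d i :=
  Finsupp.sum_fintype _ _ (fun _ => rfl)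

lemma eq_of_le_of_sum_eq {n : ℕ} {d d' : Fin (n+1) →₀ ℕ} (h : ∀ i, d i ≤ d' i)
    (hs : ∑ i, d i = ∑ i, d' i) : d = d' := by
  ext i
  exact (Finset.sum_eq_sum_iff_of_le (fun i _ => h i)).mp hs i (Finset.mem_univ i)

lemma exists_sub {n : ℕ} (k : ℕ) : ∀ (c : Fin (n+1) →₀ ℕ), k ≤ c.sum (fun _ v => v) →
    ∃ d : Fin (n+1) →₀ ℕ, d ≤ c ∧ d.sum (fun _ v => v) = k := by
  induction k with
  | zero => exact fun c _ => ⟨0, zero_le, Finsupp.sum_zero_index⟩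
  | succ k ih =>
    intro c hc
    obtain ⟨d, hdc, hds⟩ := ih c (Nat.le_of_succ_le hc)
    have hne : ∃ i, d i < c i := by
      by_contra h
      push_neg at h
      have heq : d = c := le_antisymm hdc (Finsupp.le_def.mpr h)
      rw [← heq, hds] at hc; omega
    obtain ⟨i, hi⟩ := hne
    refine ⟨d + Finsupp.single i 1, ?_, ?_⟩
    · rw [Finsupp.le_def]
      intro j
      rw [Finsupp.add_apply]
      rcases eq_or_ne i j with rfl | hij
      · rw [Finsupp.single_eq_same]; omega
      · rw [Finsupp.single_eq_of_ne' hij]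
        have := Finsupp.le_def.mp hdc j; omega
    · rw [Finsupp.sum_add_index' (fun _ => rfl) (fun _ _ _ => rfl), hds,
        Finsupp.sum_single_index rfl]

open MvPolynomial in
lemma key_lemma {R : Type*} [CommRing R] {n m : ℕ}
    (g : ((ExpVec n m × {p : Fin (n + 1) × Fin (n + 1) // p.1 < p.2})
          →₀ MvPolynomial (Fin (n + 1)) R)
        →ₗ[MvPolynomial (Fin (n + 1)) R] (ExpVec n (m + 1) →₀ MvPolynomial (Fin (n + 1)) R))
    (hg : ∀ (q : ExpVec n m) (ij : {p : Fin (n + 1) × Fin (n + 1) // p.1 < p.2}),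
      g (Finsupp.single (q, ij) 1) =
        (X ij.1.1 : MvPolynomial (Fin (n + 1)) R) • Finsupp.single (q.addVar ij.1.2) (1 : MvPolynomial (Fin (n + 1)) R)
          - (X ij.1.2 : MvPolynomial (Fin (n + 1)) R) • Finsupp.single (q.addVar ij.1.1) (1 : MvPolynomial (Fin (n + 1)) R))
    (t : ℕ) :
    ∀ (a b : Fin (n + 1) →₀ ℕ) (d d' : ExpVec n (m + 1)),
      (∑ i, (d.1 i - d'.1 i)) ≤ t → a + d.1 = b + d'.1 →
      (monomial a 1 : MvPolynomial (Fin (n + 1)) R) • Finsupp.single d (1 : MvPolynomial (Fin (n + 1)) R)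
        - (monomial b 1 : MvPolynomial (Fin (n + 1)) R) • Finsupp.single d' (1 : MvPolynomial (Fin (n + 1)) R)
        ∈ LinearMap.range g := by
  induction t with
  | zero =>
    intro a b d d' ht heq
    have hle : ∀ i, d.1 i ≤ d'.1 i := by
      intro i
      have h0 : d.1 i - d'.1 i = 0 :=
        Finset.sum_eq_zero_iff.mp (Nat.le_zero.mp ht) i (Finset.mem_univ i)
      omega
    have hsum : ∑ i, d.1 i = ∑ i, d'.1 i := by
      rw [← sum_eq_univ_sum, ← sum_eq_univ_sum, d.2, d'.2]
    have hdd : d = d' := Subtype.ext (eq_of_le_of_sum_eq hle hsum)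
    subst hdd
    rw [add_right_cancel heq, sub_self]
    exact zero_mem _
  | succ t ih =>
    intro a b d d' ht heq
    rcases eq_or_ne d d' with rfl | hne
    · rw [add_right_cancel heq, sub_self]; exact zero_mem _
    have hsum : ∑ i, d.1 i = ∑ i, d'.1 i := by
      rw [← sum_eq_univ_sum, ← sum_eq_univ_sum, d.2, d'.2]
    have hne' : d.1 ≠ d'.1 := fun h => hne (Subtype.ext h)
    have hi : ∃ i, d'.1 i < d.1 i := by
      by_contra h; push_neg at h
      exact hne' (eq_of_le_of_sum_eq h hsum)
    have hj : ∃ j, d.1 j < d'.1 j := by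
      by_contra h; push_neg at h
      exact hne' ((eq_of_le_of_sum_eq h hsum.symm).symm)
    obtain ⟨i, hi⟩ := hi
    obtain ⟨j, hj⟩ := hj
    have hij : i ≠ j := fun h => by rw [h] at hi; omega
    have happ : ∀ x, a x + d.1 x = b x + d'.1 x := by
      intro x
      have := congrArg (fun z : Fin (n+1) →₀ ℕ => z x) heq
      simpa using this
    -- q := d' - δ_j has degree m
    have hsj : Finsupp.single j 1 ≤ d'.1 := by
      rw [Finsupp.le_def]; intro x
      rcases eq_or_ne j x with rfl | hxx
      · rw [Finsupp.single_eq_same]; omega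
      · rw [Finsupp.single_eq_of_ne' hxx]; exact Nat.zero_le _
    have hq1 : (d'.1 - Finsupp.single j 1) + Finsupp.single j 1 = d'.1 :=
      tsub_add_cancel_of_le hsj
    have hqsum : (d'.1 - Finsupp.single j 1).sum (fun _ v => v) = m := by
      have h2 := congrArg (fun z : Fin (n+1) →₀ ℕ => z.sum fun _ v => v) hq1
      replace h2 : (d'.1 - Finsupp.single j 1 + Finsupp.single j 1).sum (fun _ v => v) = d'.1.sum (fun _ v => v) := h2
      rw [Finsupp.sum_add_index' (fun _ => rfl) (fun _ _ _ => rfl),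
        Finsupp.sum_single_index rfl, d'.2] at h2
      omega
    set q : ExpVec n m := ⟨d'.1 - Finsupp.single j 1, hqsum⟩ with hqdef
    have hqj : q.addVar j = d' := Subtype.ext hq1
    set d'' : ExpVec n (m+1) := q.addVar i with hd''def
    have hd1 : d''.1 = d'.1 - Finsupp.single j 1 + Finsupp.single i 1 := rfl
    have hval : ∀ x, d''.1 x = d'.1 x - (Finsupp.single j 1 : Fin (n+1) →₀ ℕ) x
        + (Finsupp.single i 1 : Fin (n+1) →₀ ℕ) x := by
      intro x
      rw [hd1, Finsupp.add_apply, Finsupp.tsub_apply]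
    have hbi : 1 ≤ b i := by have := happ i; omega
    have hsbi : Finsupp.single i 1 ≤ b := by
      rw [Finsupp.le_def]; intro x
      rcases eq_or_ne i x with rfl | hxx
      · rw [Finsupp.single_eq_same]; omega
      · rw [Finsupp.single_eq_of_ne' hxx]; exact Nat.zero_le _
    set b' : Fin (n+1) →₀ ℕ := b - Finsupp.single i 1 + Finsupp.single j 1 with hb'def
    have hbcancel : (b - Finsupp.single i 1) + Finsupp.single i 1 = b :=
      tsub_add_cancel_of_le hsbi
    have hb'val : ∀ x, b' x = b x - (Finsupp.single i 1 : Fin (n+1) →₀ ℕ) x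
        + (Finsupp.single j 1 : Fin (n+1) →₀ ℕ) x := by
      intro x
      rw [hb'def, Finsupp.add_apply, Finsupp.tsub_apply]
    -- the elementary relation
    have hrel : (monomial b 1 : MvPolynomial (Fin (n + 1)) R) • Finsupp.single d' (1 : MvPolynomial (Fin (n + 1)) R)
        - (monomial b' 1 : MvPolynomial (Fin (n + 1)) R) • Finsupp.single d'' (1 : MvPolynomial (Fin (n + 1)) R)
        ∈ LinearMap.range g := by
      have hXi : (X i : MvPolynomial (Fin (n + 1)) R) = monomial (Finsupp.single i 1) 1 := rfl
      have hXj : (X j : MvPolynomial (Fin (n + 1)) R) = monomial (Finsupp.single j 1) 1 := rfl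
      rcases lt_or_gt_of_ne hij with hlt | hgt
      · have hrg : (monomial (b - Finsupp.single i 1) 1 : MvPolynomial (Fin (n + 1)) R) •
            g (Finsupp.single (q, ⟨(i, j), hlt⟩) 1) ∈ LinearMap.range g :=
          Submodule.smul_mem _ _ ⟨_, rfl⟩
        rw [hg q ⟨(i, j), hlt⟩] at hrg
        simp only [hqj] at hrg
        rw [smul_sub, smul_smul, smul_smul, hXi, hXj, monomial_mul, monomial_mul,
          mul_one, hbcancel] at hrg
        exact hrg
      · have hrg : (monomial (b - Finsupp.single i 1) 1 : MvPolynomial (Fin (n + 1)) R) •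
            g (Finsupp.single (q, ⟨(j, i), hgt⟩) 1) ∈ LinearMap.range g :=
          Submodule.smul_mem _ _ ⟨_, rfl⟩
        rw [hg q ⟨(j, i), hgt⟩] at hrg
        simp only [hqj] at hrg
        rw [smul_sub, smul_smul, smul_smul, hXi, hXj, monomial_mul, monomial_mul,
          mul_one, hbcancel] at hrg
        have := neg_mem hrg
        rw [neg_sub] at this
        exact this
    -- new equation
    have heq' : a + d.1 = b' + d''.1 := by
      ext x
      rw [Finsupp.add_apply, Finsupp.add_apply, hval x, hb'val x]
      have h1 := happ x
      rcases eq_or_ne i x with rfl | hix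
      · rw [Finsupp.single_eq_same, Finsupp.single_eq_of_ne' (fun h : j = i => hij h.symm)]
        omega
      · rcases eq_or_ne j x with rfl | hjx
        · rw [Finsupp.single_eq_same, Finsupp.single_eq_of_ne' hix]
          omega
        · rw [Finsupp.single_eq_of_ne' hix, Finsupp.single_eq_of_ne' hjx]
          omega
    -- measure decreases
    have ht' : (∑ x, (d.1 x - d''.1 x)) ≤ t := by
      have h1 : ∑ x ∈ Finset.univ.erase i, (d.1 x - d''.1 x)
          = ∑ x ∈ Finset.univ.erase i, (d.1 x - d'.1 x) := by
        apply Finset.sum_congr rfl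
        intro x hx
        have hxi : x ≠ i := (Finset.mem_erase.mp hx).1
        rw [hval x, Finsupp.single_eq_of_ne' (fun h : i = x => hxi h.symm)]
        rcases eq_or_ne j x with rfl | hjx
        · rw [Finsupp.single_eq_same]; omega
        · rw [Finsupp.single_eq_of_ne' hjx]; omega
      have h2 : d''.1 i = d'.1 i + 1 := by
        rw [hval i, Finsupp.single_eq_same, Finsupp.single_eq_of_ne' (fun h : j = i => hij h.symm)]
        omega
      have e1 : (∑ x, (d.1 x - d''.1 x))
          = (d.1 i - d''.1 i) + ∑ x ∈ Finset.univ.erase i, (d.1 x - d''.1 x) :=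
        (Finset.add_sum_erase _ _ (Finset.mem_univ i)).symm
      have e2 : (∑ x, (d.1 x - d'.1 x))
          = (d.1 i - d'.1 i) + ∑ x ∈ Finset.univ.erase i, (d.1 x - d'.1 x) :=
        (Finset.add_sum_erase _ _ (Finset.mem_univ i)).symm
      omega
    have hmain := ih a b' d d'' ht' heq'
    have hfin := sub_mem hmain hrel
    have hrw : (monomial a 1 : MvPolynomial (Fin (n + 1)) R) • Finsupp.single d (1 : MvPolynomial (Fin (n + 1)) R)
        - (monomial b 1 : MvPolynomial (Fin (n + 1)) R) • Finsupp.single d' (1 : MvPolynomial (Fin (n + 1)) R)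
        = ((monomial a 1 : MvPolynomial (Fin (n + 1)) R) • Finsupp.single d (1 : MvPolynomial (Fin (n + 1)) R)
            - (monomial b' 1 : MvPolynomial (Fin (n + 1)) R) • Finsupp.single d'' (1 : MvPolynomial (Fin (n + 1)) R))
          - ((monomial b 1 : MvPolynomial (Fin (n + 1)) R) • Finsupp.single d' (1 : MvPolynomial (Fin (n + 1)) R)
            - (monomial b' 1 : MvPolynomial (Fin (n + 1)) R) • Finsupp.single d'' (1 : MvPolynomial (Fin (n + 1)) R)) := by
      abel
    rw [hrw]
    exact hfin

theorem stmt_7 (R : Type*) [CommRing R] (n m : ℕ)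
    (f : (ExpVec n (m + 1) →₀ MvPolynomial (Fin (n + 1)) R)
        →ₗ[MvPolynomial (Fin (n + 1)) R] MvPolynomial (Fin (n + 1)) R)
    (g : ((ExpVec n m × {p : Fin (n + 1) × Fin (n + 1) // p.1 < p.2})
          →₀ MvPolynomial (Fin (n + 1)) R)
        →ₗ[MvPolynomial (Fin (n + 1)) R] (ExpVec n (m + 1) →₀ MvPolynomial (Fin (n + 1)) R))
    (hf : ∀ d : ExpVec n (m + 1), f (Finsupp.single d 1) = MvPolynomial.monomial d.1 1)
    (hg : ∀ (q : ExpVec n m) (ij : {p : Fin (n + 1) × Fin (n + 1) // p.1 < p.2}),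
      g (Finsupp.single (q, ij) 1) =
        (MvPolynomial.X ij.1.1 : MvPolynomial (Fin (n + 1)) R) • Finsupp.single (q.addVar ij.1.2) (1 : MvPolynomial (Fin (n + 1)) R)
          - (MvPolynomial.X ij.1.2 : MvPolynomial (Fin (n + 1)) R) • Finsupp.single (q.addVar ij.1.1) (1 : MvPolynomial (Fin (n + 1)) R)) :
    LinearMap.range f =
        Ideal.span {x : MvPolynomial (Fin (n + 1)) R |
          ∃ d : ExpVec n (m + 1), x = MvPolynomial.monomial d.1 1} ∧
      LinearMap.ker f = LinearMap.range g := by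
  classical
  constructor
  · -- range f = span
    apply le_antisymm
    · rintro x ⟨v, rfl⟩
      induction v using Finsupp.induction_linear with
      | zero => rw [map_zero]; exact zero_mem _
      | add p q hp hq => rw [map_add]; exact add_mem hp hq
      | single d p =>
        have e1 : Finsupp.single d p = p • Finsupp.single d (1 : MvPolynomial (Fin (n + 1)) R) := by
          rw [Finsupp.smul_single', mul_one]
        rw [e1, map_smul, hf, smul_eq_mul]
        exact Ideal.mul_mem_left _ _ (Ideal.subset_span ⟨d, rfl⟩)
    · rw [Ideal.span_le]
      rintro x ⟨d, rfl⟩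
      exact ⟨Finsupp.single d 1, hf d⟩
  · -- ker f = range g
    apply le_antisymm
    · -- ker f ≤ range g
      intro v hv
      choose dec hdec1 hdec2 using fun (c : Fin (n+1) →₀ ℕ) (h : m + 1 ≤ c.sum fun _ v => v) =>
        exists_sub (m+1) c h
      set S := MvPolynomial (Fin (n + 1)) R
      let π : (ExpVec n (m+1) →₀ S) →ₗ[R] _ := ((LinearMap.range g).mkQ).restrictScalars R
      let w : (Fin (n+1) →₀ ℕ) → ((ExpVec n (m+1) →₀ S) ⧸ LinearMap.range g) := fun c =>
        if h : m + 1 ≤ c.sum (fun _ v => v) then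
          π ((MvPolynomial.monomial (c - dec c h) 1 : S) •
            Finsupp.single (⟨dec c h, hdec2 c h⟩ : ExpVec n (m+1)) (1 : S))
        else 0
      let Θ : S →ₗ[R] ((ExpVec n (m+1) →₀ S) ⧸ LinearMap.range g) :=
        (MvPolynomial.basisMonomials (Fin (n+1)) R).constr ℕ w
      have hmaps : π = Θ ∘ₗ (f.restrictScalars R) := by
        apply Finsupp.lhom_ext
        intro d p
        induction p using MvPolynomial.induction_on' with
        | add p1 p2 hp1 hp2 =>
          rw [Finsupp.single_add, map_add, map_add, hp1, hp2]
        | monomial a r =>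
          have e1 : Finsupp.single d (MvPolynomial.monomial a r)
              = (MvPolynomial.monomial a r : S) • Finsupp.single d (1 : S) := by
            rw [Finsupp.smul_single', mul_one]
          have e2 : (MvPolynomial.monomial a r : S) = r • (MvPolynomial.monomial a 1 : S) := by
            rw [MvPolynomial.smul_monomial, smul_eq_mul, mul_one]
          -- RHS
          have hfval : (f.restrictScalars R) (Finsupp.single d (MvPolynomial.monomial a r))
              = MvPolynomial.monomial (a + d.1) r := by
            show f (Finsupp.single d (MvPolynomial.monomial a r)) = _
            rw [e1, map_smul, hf, smul_eq_mul, MvPolynomial.monomial_mul, mul_one]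
          have hsum : m + 1 ≤ (a + d.1).sum (fun _ v => v) := by
            rw [Finsupp.sum_add_index' (fun _ => rfl) (fun _ _ _ => rfl), d.2]
            exact Nat.le_add_left _ _
          have hw : π ((MvPolynomial.monomial a 1 : S) • Finsupp.single d (1 : S))
              = w (a + d.1) := by
            show Submodule.Quotient.mk _ = w (a + d.1)
            rw [show w (a + d.1) = π ((MvPolynomial.monomial ((a + d.1) - dec (a + d.1) hsum) 1 : S) •
                Finsupp.single (⟨dec (a + d.1) hsum, hdec2 (a + d.1) hsum⟩ : ExpVec n (m+1)) (1 : S))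
              from dif_pos hsum]
            show Submodule.Quotient.mk _ = Submodule.Quotient.mk _
            refine (Submodule.Quotient.eq (p := LinearMap.range g)).mpr ?_
            exact key_lemma g hg (∑ x, (d.1 x - dec (a + d.1) hsum x)) _ _ _ _ le_rfl
              (tsub_add_cancel_of_le (hdec1 _ hsum)).symm
          rw [LinearMap.comp_apply, hfval]
          have e3 : (MvPolynomial.monomial (a + d.1) r : S)
              = r • ((MvPolynomial.basisMonomials (Fin (n+1)) R) (a + d.1)) := by
            rw [MvPolynomial.coe_basisMonomials]
            rw [MvPolynomial.smul_monomial, smul_eq_mul, mul_one]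
          rw [e3, map_smul, Module.Basis.constr_basis]
          rw [show π (Finsupp.single d (MvPolynomial.monomial a r))
              = r • π ((MvPolynomial.monomial a 1 : S) • Finsupp.single d (1 : S)) by
            rw [e1, e2, smul_assoc, map_smul]]
          rw [hw]
      have h0 : π v = 0 := by
        rw [hmaps]
        have : f v = 0 := hv
        show Θ (f v) = 0
        rw [this, map_zero]
      exact (Submodule.Quotient.mk_eq_zero _).mp h0
    · -- range g ≤ ker f
      rintro x ⟨v, rfl⟩
      rw [LinearMap.mem_ker]
      induction v using Finsupp.induction_linear with
      | zero => rw [map_zero, map_zero]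
      | add p q hp hq => rw [map_add, map_add, hp, hq, add_zero]
      | single qij p =>
        obtain ⟨q, ij⟩ := qij
        have e1 : Finsupp.single (q, ij) p
            = p • Finsupp.single (q, ij) (1 : MvPolynomial (Fin (n + 1)) R) := by
          rw [Finsupp.smul_single', mul_one]
        rw [e1, map_smul, map_smul, hg, map_sub, map_smul, map_smul, hf, hf]
        have : (ExpVec.addVar q ij.1.2).1 = q.1 + Finsupp.single ij.1.2 1 := rfl
        rw [this]
        have : (ExpVec.addVar q ij.1.1).1 = q.1 + Finsupp.single ij.1.1 1 := rfl
        rw [this]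
        have hX : ∀ (i : Fin (n+1)) (e : Fin (n+1) →₀ ℕ),
            (MvPolynomial.X i : MvPolynomial (Fin (n + 1)) R) • (MvPolynomial.monomial e 1 : MvPolynomial (Fin (n + 1)) R)
            = MvPolynomial.monomial (e + Finsupp.single i 1) 1 := by
          intro i e
          rw [smul_eq_mul, show (MvPolynomial.X i : MvPolynomial (Fin (n + 1)) R)
            = MvPolynomial.monomial (Finsupp.single i 1) 1 from rfl,
            MvPolynomial.monomial_mul, mul_one]
          exact congrArg (fun u => (MvPolynomial.monomial u (1 : R))) (add_comm _ _)
        rw [hX, hX]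
        rw [show q.1 + Finsupp.single ij.1.2 1 + Finsupp.single ij.1.1 1
            = q.1 + Finsupp.single ij.1.1 1 + Finsupp.single ij.1.2 1 by
          rw [add_assoc, add_assoc, add_comm (Finsupp.single ij.1.2 1)]]
        rw [sub_self, smul_zero]
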